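/- Let G be a finite group and C a conjugacy class of G not containing e. Then the column sums of the Killing form matrix K(a,b) = |Z(ab) ∩ C| are all equal; equivalently, the vector θ = Σ_{a∈C} x_a is an eigenvector of K with eigenvalue Σ_{a∈C} |Z(ab) ∩ C| (independent of b ∈ C). -/

import Mathlib

/-- For a conjugacy class `C` not containing `e`, all column sums of the
Killing form matrix `K(a,b) = |Z(ab) ∩ C|` are equal; equivalently the vector
`θ = Σ_a x_a` (all-ones) is an eigenvector of `K` with that common sum as
eigenvalue. -/
theorem stmt_13 {G : Type*} [Group G] [Fintype G] [DecidableEq G]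
    (x : G) (hx : x ≠ 1) (C : Finset G) (hC : ∀ a, a ∈ C ↔ IsConj x a) :
    ∃ c : ℕ,
      (∀ b ∈ C, ∑ a ∈ C, (C.filter fun h => h * (a * b) = (a * b) * h).card = c) ∧
      Matrix.vecMul (fun _ => (1 : ℝ))
        (Matrix.of fun a b : C =>
          ((C.filter fun h => h * ((a : G) * b) = ((a : G) * b) * h).card : ℝ))
        = fun _ => (c : ℝ) := by
  classical
  have hCconj : ∀ (g a : G), a ∈ C → g * a * g⁻¹ ∈ C := by
    intro g a ha
    rw [hC] at ha ⊢
    exact ha.trans (isConj_iff.2 ⟨g, rfl⟩)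
  have haux1 : ∀ (g t : G),
      (C.filter fun h => h * (g * t * g⁻¹) = (g * t * g⁻¹) * h).card
        = (C.filter fun h => h * t = t * h).card := by
    intro g t
    symm
    apply Finset.card_bij' (fun h _ => g * h * g⁻¹) (fun h _ => g⁻¹ * h * g)
    · intro h hh
      simp only [Finset.mem_filter] at hh ⊢
      exact ⟨hCconj g h hh.1, (Commute.conj_iff (a := h) (b := t) g).2 hh.2⟩
    · intro h hh
      simp only [Finset.mem_filter] at hh ⊢
      constructor
      · have := hCconj g⁻¹ h hh.1
        simpa using this
      · have : Commute (g * (g⁻¹ * h * g) * g⁻¹) (g * t * g⁻¹) := by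
          have heq : g * (g⁻¹ * h * g) * g⁻¹ = h := by group
          rw [heq]; exact hh.2
        exact (Commute.conj_iff g).1 this
    · intro h _; group
    · intro h _; group
  -- For b, b' conjugate, the column sums agree
  have hkey : ∀ b ∈ C, ∑ a ∈ C, (C.filter fun h => h * (a * b) = (a * b) * h).card
      = ∑ a ∈ C, (C.filter fun h => h * (a * x) = (a * x) * h).card := by
    intro b hb
    obtain ⟨g, hg⟩ := isConj_iff.1 ((hC b).1 hb)
    subst hg
    symm
    apply Finset.sum_bij (fun a _ => g * a * g⁻¹)
    · intro a ha; exact hCconj g a ha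
    · intro a₁ h₁ a₂ h₂ e
      have := congrArg (fun z => g⁻¹ * z * g) e
      simpa [mul_assoc] using this
    · intro a ha
      refine ⟨g⁻¹ * a * g, by simpa using hCconj g⁻¹ a ha, by group⟩
    · intro a ha
      have h1 : g * a * g⁻¹ * (g * x * g⁻¹) = g * (a * x) * g⁻¹ := by group
      rw [h1, haux1]
  have hxC : x ∈ C := (hC x).2 (IsConj.refl x)
  refine ⟨∑ a ∈ C, (C.filter fun h => h * (a * x) = (a * x) * h).card, hkey, ?_⟩
  funext b
  have hb := hkey b.1 b.2
  simp only [Matrix.vecMul, dotProduct, Matrix.of_apply, one_mul]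
  rw [← hb]
  push_cast
  rw [← Finset.sum_coe_sort C
    (fun a => ((C.filter fun h => h * (a * (b : G)) = (a * (b : G)) * h).card : ℝ))]
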